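/- Let m ≤ n with m, n ≥ 2, and let G be any graph on m vertices without isolated vertices. Then d_t(G □ K_n) = d(G □ K_n) = n. In particular d_t(K_m □ K_n) = d(K_m □ K_n) = max{m,n}. -/

import Mathlib

open SimpleGraph Finset

/-- A domatic `k`-coloring: every vertex sees all `k` colors in its closed neighborhood. -/
def IsDomaticColoring {V : Type*} (G : SimpleGraph V) (k : ℕ) (f : V → Fin k) : Prop :=
  ∀ v : V, ∀ c : Fin k, ∃ u : V, (u = v ∨ G.Adj v u) ∧ f u = c

/-- A total domatic `k`-coloring: every vertex sees all `k` colors in its open neighborhood. -/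
def IsTotalDomaticColoring {V : Type*} (G : SimpleGraph V) (k : ℕ) (f : V → Fin k) : Prop :=
  ∀ v : V, ∀ c : Fin k, ∃ u : V, G.Adj v u ∧ f u = c

/-- The domatic number `d(G)`. -/
noncomputable def domaticNumber {V : Type*} (G : SimpleGraph V) : ℕ :=
  sSup {k | ∃ f : V → Fin k, IsDomaticColoring G k f}

/-- The total domatic number `d_t(G)`. -/
noncomputable def totalDomaticNumber {V : Type*} (G : SimpleGraph V) : ℕ :=
  sSup {k | ∃ f : V → Fin k, IsTotalDomaticColoring G k f}

def IsDominatingSet {V : Type*} (G : SimpleGraph V) (D : Set V) : Prop :=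
  ∀ v : V, v ∈ D ∨ ∃ u ∈ D, G.Adj v u

def IsTotalDominatingSet {V : Type*} (G : SimpleGraph V) (D : Set V) : Prop :=
  ∀ v : V, ∃ u ∈ D, G.Adj v u

noncomputable def dominationNumber {V : Type*} (G : SimpleGraph V) [Fintype V] : ℕ :=
  sInf {n | ∃ D : Finset V, D.card = n ∧ IsDominatingSet G ↑D}

noncomputable def totalDominationNumber {V : Type*} (G : SimpleGraph V) [Fintype V] : ℕ :=
  sInf {n | ∃ D : Finset V, D.card = n ∧ IsTotalDominatingSet G ↑D}

/-- An injective `k`-coloring: vertices with a common neighbor get distinct colors. -/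
def IsInjectiveColoring {V : Type*} (G : SimpleGraph V) (k : ℕ) (f : V → Fin k) : Prop :=
  ∀ u w v : V, G.Adj v u → G.Adj v w → u ≠ w → f u ≠ f w

noncomputable def injChromaticNumber {V : Type*} (G : SimpleGraph V) : ℕ :=
  sInf {k | ∃ f : V → Fin k, IsInjectiveColoring G k f}

def NoIsolated {V : Type*} (G : SimpleGraph V) : Prop := ∀ v : V, ∃ u, G.Adj v u

/-- The Hamming graph `H(n,q)`: vertices differ in exactly one coordinate. -/
def hammingGraph (n q : ℕ) : SimpleGraph (Fin n → Fin q) :=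
  SimpleGraph.fromRel (fun x y => ∃ i, x i ≠ y i ∧ ∀ j, j ≠ i → x j = y j)

/-- The hypercube `Q n`. -/
def hypercube (n : ℕ) : SimpleGraph (Fin n → Fin 2) := hammingGraph n 2

/-- The torus `C_{k 0} □ ⋯ □ C_{k (d-1)}`. -/
def torusGraph (d : ℕ) (k : Fin d → ℕ) : SimpleGraph (∀ i : Fin d, ZMod (k i)) :=
  SimpleGraph.fromRel (fun x y => ∃ i, x i = y i + 1 ∧ ∀ j, j ≠ i → x j = y j)

/-- Transfer of the coloring sets along a graph isomorphism-like equivalence. -/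
lemma domatic_congr {V W : Type*} (G : SimpleGraph V) (H : SimpleGraph W) (e : V ≃ W)
    (he : ∀ a b, G.Adj a b ↔ H.Adj (e a) (e b)) (k : ℕ)
    (f : W → Fin k) (hf : IsDomaticColoring H k f) :
    IsDomaticColoring G k (f ∘ e) := by
  intro v c
  obtain ⟨u, hu, hfu⟩ := hf (e v) c
  refine ⟨e.symm u, ?_, by simpa using hfu⟩
  rcases hu with h | h
  · exact Or.inl (by simp [h])
  · exact Or.inr (by rw [he]; simpa using h)

lemma total_domatic_congr {V W : Type*} (G : SimpleGraph V) (H : SimpleGraph W) (e : V ≃ W)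
    (he : ∀ a b, G.Adj a b ↔ H.Adj (e a) (e b)) (k : ℕ)
    (f : W → Fin k) (hf : IsTotalDomaticColoring H k f) :
    IsTotalDomaticColoring G k (f ∘ e) := by
  intro v c
  obtain ⟨u, hu, hfu⟩ := hf (e v) c
  exact ⟨e.symm u, by rw [he]; simpa using hu, by simpa using hfu⟩

/-- Every "fiber-style" dominating set of `G □ K n` has at least `m` elements. -/
lemma dom_card_lower {V : Type*} [Fintype V] (G : SimpleGraph V) (m n : ℕ)
    (hm : Fintype.card V = m) (hmn : m ≤ n) (D : Finset (V × Fin n))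
    (hD : ∀ p : V × Fin n, p ∈ D ∨ ∃ u ∈ D, (G □ (⊤ : SimpleGraph (Fin n))).Adj p u) :
    m ≤ D.card := by
  classical
  by_cases hc : n ≤ D.card
  · exact hmn.trans hc
  push_neg at hc
  -- find a column index i₀ not hit by D
  have himg : (D.image Prod.snd) ≠ univ := by
    intro h
    have : n ≤ (D.image Prod.snd).card := by
      rw [h]; simp
    exact absurd (le_trans this (card_image_le)) (by omega)
  obtain ⟨i₀, hi₀⟩ : ∃ i₀ : Fin n, i₀ ∉ D.image Prod.snd := by
    by_contra h
    push_neg at h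
    exact himg (eq_univ_iff_forall.mpr h)
  have hsub : (univ : Finset V) ⊆ D.image Prod.fst := by
    intro v _
    rcases hD (v, i₀) with h | ⟨u, huD, hadj⟩
    · exact absurd (mem_image_of_mem Prod.snd h) hi₀
    · rw [SimpleGraph.boxProd_adj] at hadj
      rcases hadj with ⟨_, h2⟩ | ⟨_, h2⟩
      · have hu2 : u.2 ∈ D.image Prod.snd := mem_image_of_mem _ huD
        rw [← h2] at hu2
        exact absurd hu2 hi₀
      · have hu1 : u.1 ∈ D.image Prod.fst := mem_image_of_mem _ huD
        rwa [← h2] at hu1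
  calc m = (univ : Finset V).card := by simp [hm]
    _ ≤ (D.image Prod.fst).card := card_le_card hsub
    _ ≤ D.card := card_image_le

lemma domatic_le {V : Type*} [Fintype V] (G : SimpleGraph V) (m n k : ℕ)
    (hm : Fintype.card V = m) (h2m : 2 ≤ m) (hmn : m ≤ n)
    (f : V × Fin n → Fin k) (hf : IsDomaticColoring (G □ (⊤ : SimpleGraph (Fin n))) k f) :
    k ≤ n := by
  classical
  have hcard : (univ : Finset (V × Fin n)).card =
      ∑ c : Fin k, (univ.filter (fun x => f x = c)).card :=
    card_eq_sum_card_fiberwise (fun x _ => mem_univ (f x))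
  have hlb : ∀ c : Fin k, m ≤ (univ.filter (fun x => f x = c)).card := by
    intro c
    refine dom_card_lower G m n hm hmn _ (fun p => ?_)
    obtain ⟨u, hu, hfu⟩ := hf p c
    rcases hu with h | h
    · exact Or.inl (by simp [h ▸ hfu])
    · exact Or.inr ⟨u, by simp [hfu], h⟩
  have : k * m ≤ m * n := by
    calc k * m = ∑ _c : Fin k, m := by simp [mul_comm]
      _ ≤ ∑ c : Fin k, (univ.filter (fun x => f x = c)).card := Finset.sum_le_sum fun c _ => hlb c
      _ = (univ : Finset (V × Fin n)).card := hcard.symm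
      _ = m * n := by simp [card_univ, hm]
  have hmpos : 0 < m := by omega
  nlinarith

lemma domaticNumber_boxProd_comm {V W : Type*} (G : SimpleGraph V) (H : SimpleGraph W) :
    domaticNumber (G □ H) = domaticNumber (H □ G) := by
  unfold domaticNumber
  congr 1
  ext k
  constructor
  · rintro ⟨f, hf⟩
    exact ⟨f ∘ (Equiv.prodComm W V),
      domatic_congr _ _ _ (fun a b => by simp [SimpleGraph.boxProd_adj]; tauto) k f hf⟩
  · rintro ⟨f, hf⟩
    exact ⟨f ∘ (Equiv.prodComm V W),
      domatic_congr _ _ _ (fun a b => by simp [SimpleGraph.boxProd_adj]; tauto) k f hf⟩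

lemma totalDomaticNumber_boxProd_comm {V W : Type*} (G : SimpleGraph V) (H : SimpleGraph W) :
    totalDomaticNumber (G □ H) = totalDomaticNumber (H □ G) := by
  unfold totalDomaticNumber
  congr 1
  ext k
  constructor
  · rintro ⟨f, hf⟩
    exact ⟨f ∘ (Equiv.prodComm W V),
      total_domatic_congr _ _ _ (fun a b => by simp [SimpleGraph.boxProd_adj]; tauto) k f hf⟩
  · rintro ⟨f, hf⟩
    exact ⟨f ∘ (Equiv.prodComm V W),
      total_domatic_congr _ _ _ (fun a b => by simp [SimpleGraph.boxProd_adj]; tauto) k f hf⟩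

lemma main_aux {V : Type*} [Fintype V] (G : SimpleGraph V) (m n : ℕ)
    (hm : Fintype.card V = m) (h2m : 2 ≤ m) (h2n : 2 ≤ n) (hmn : m ≤ n) (hG : NoIsolated G) :
    totalDomaticNumber (G □ (⊤ : SimpleGraph (Fin n))) = n ∧
    domaticNumber (G □ (⊤ : SimpleGraph (Fin n))) = n := by
  have hTD : IsTotalDomaticColoring (G □ (⊤ : SimpleGraph (Fin n))) n Prod.snd := by
    rintro ⟨v, i⟩ c
    by_cases hci : c = i
    · obtain ⟨u, hu⟩ := hG v
      exact ⟨(u, i), by simp [SimpleGraph.boxProd_adj, hu], hci.symm⟩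
    · refine ⟨(v, c), ?_, rfl⟩
      rw [SimpleGraph.boxProd_adj]
      exact Or.inr ⟨by simpa using Ne.symm hci, rfl⟩
  have hDD : IsDomaticColoring (G □ (⊤ : SimpleGraph (Fin n))) n Prod.snd := by
    intro v c
    obtain ⟨u, h1, h2⟩ := hTD v c
    exact ⟨u, Or.inr h1, h2⟩
  have hubD : ∀ k ∈ {k | ∃ f : V × Fin n → Fin k,
      IsDomaticColoring (G □ (⊤ : SimpleGraph (Fin n))) k f}, k ≤ n := by
    rintro k ⟨f, hf⟩
    exact domatic_le G m n k hm h2m hmn f hf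
  have hubT : ∀ k ∈ {k | ∃ f : V × Fin n → Fin k,
      IsTotalDomaticColoring (G □ (⊤ : SimpleGraph (Fin n))) k f}, k ≤ n := by
    rintro k ⟨f, hf⟩
    refine domatic_le G m n k hm h2m hmn f (fun v c => ?_)
    obtain ⟨u, h1, h2⟩ := hf v c
    exact ⟨u, Or.inr h1, h2⟩
  constructor
  · exact IsGreatest.csSup_eq ⟨⟨Prod.snd, hTD⟩, hubT⟩
  · exact IsGreatest.csSup_eq ⟨⟨Prod.snd, hDD⟩, hubD⟩

lemma top_noIsolated (k : ℕ) (h2 : 2 ≤ k) : NoIsolated (⊤ : SimpleGraph (Fin k)) := by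
  intro v
  obtain ⟨u, hu⟩ := Fintype.exists_ne_of_one_lt_card (by rw [Fintype.card_fin]; omega) v
  exact ⟨u, by simpa using Ne.symm hu⟩

theorem domatic_boxProd_completeGraph {V : Type*} [Fintype V] (G : SimpleGraph V)
    (m n : ℕ) (hm : Fintype.card V = m) (h2m : 2 ≤ m) (h2n : 2 ≤ n) (hmn : m ≤ n)
    (hG : NoIsolated G) :
    totalDomaticNumber (G □ (⊤ : SimpleGraph (Fin n))) = n ∧
    domaticNumber (G □ (⊤ : SimpleGraph (Fin n))) = n ∧
    (∀ m' n' : ℕ, 2 ≤ m' → 2 ≤ n' →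
      totalDomaticNumber ((⊤ : SimpleGraph (Fin m')) □ (⊤ : SimpleGraph (Fin n'))) = max m' n' ∧
      domaticNumber ((⊤ : SimpleGraph (Fin m')) □ (⊤ : SimpleGraph (Fin n'))) = max m' n') := by
  obtain ⟨h1, h2⟩ := main_aux G m n hm h2m h2n hmn hG
  refine ⟨h1, h2, fun m' n' h2m' h2n' => ?_⟩
  rcases le_total m' n' with h | h
  · rw [max_eq_right h]
    exact main_aux (⊤ : SimpleGraph (Fin m')) m' n' (by simp) h2m' h2n' h
      (top_noIsolated m' h2m')
  · rw [max_eq_left h, totalDomaticNumber_boxProd_comm, domaticNumber_boxProd_comm]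
    exact main_aux (⊤ : SimpleGraph (Fin n')) n' m' (by simp) h2n' h2m' h
      (top_noIsolated n' h2n')
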